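/- Let 𝔥 be a DGLA, γ₁, γ₂ ∈ MC(𝔥), and X ∈ 𝔥⁰ nilpotent (e.g. 𝔥 nilpotent) such that γ₂ = (exp X)·γ₁ where the gauge action is (exp X)·γ = γ − Σ_{i≥0} (ad X)^i/(i+1)! (δX + [γ, X]). Then d + ad(γ₂) = Ad(exp X) ∘ (d + ad(γ₁)) ∘ Ad(exp X)⁻¹, i.e. δ + ad(γ₂) = e^{ad X} ∘ (δ + ad(γ₁)) ∘ e^{−ad X} as operators on 𝔥. -/

import Mathlib

/-- A (ℤ-graded) differential graded Lie algebra over ℚ: a family of ℚ-modules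
`G i`, a degree-1 differential `d` with `d ∘ d = 0`, and a graded bracket
satisfying graded antisymmetry, the graded Leibniz rule and the graded Jacobi
identity. -/
structure DGLA where
  G : ℤ → Type
  [grp : ∀ i, AddCommGroup (G i)]
  [mod : ∀ i, Module ℚ (G i)]
  d : ∀ i, G i →ₗ[ℚ] G (i + 1)
  bracket : ∀ i j, G i →ₗ[ℚ] G j →ₗ[ℚ] G (i + j)
  d_sq : ∀ i (x : G i), d (i + 1) (d i x) = 0
  antisymm : ∀ i j (x : G i) (y : G j),
    bracket i j x y
      = (-((-1 : ℚ) ^ (i * j))) • cast (congrArg G (add_comm j i)) (bracket j i y x)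
  leibniz : ∀ i j (x : G i) (y : G j),
    d (i + j) (bracket i j x y)
      = cast (congrArg G (by ring : i + 1 + j = i + j + 1)) (bracket (i + 1) j (d i x) y)
        + ((-1 : ℚ) ^ i) •
          cast (congrArg G (by ring : i + (j + 1) = i + j + 1)) (bracket i (j + 1) x (d j y))
  jacobi : ∀ i j k (x : G i) (y : G j) (z : G k),
    cast (congrArg G (by ring : i + (j + k) = i + j + k)) (bracket i (j + k) x (bracket j k y z))
      = bracket (i + j) k (bracket i j x y) z
        + ((-1 : ℚ) ^ (i * j)) •
          cast (congrArg G (by ring : j + (i + k) = i + j + k)) (bracket j (i + k) y (bracket i k x z))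

attribute [instance] DGLA.grp DGLA.mod

/-- Transport along an equality of degrees. -/
def DGLA.cst (𝔤 : DGLA) {i j : ℤ} (h : i = j) (x : 𝔤.G i) : 𝔤.G j :=
  cast (congrArg 𝔤.G h) x

/-- The curvature of a degree-1 element: `F(μ) = δμ + (1/2)[μ,μ]`. -/
def DGLA.curv (𝔤 : DGLA) (μ : 𝔤.G 1) : 𝔤.G 2 :=
  𝔤.d 1 μ + (1/2 : ℚ) • 𝔤.bracket 1 1 μ μ

/-- Iterated adjoint action `(ad X)^n` of a degree-0 element on `𝔤^k`. -/
def DGLA.adpow (𝔤 : DGLA) (X : 𝔤.G 0) : ℕ → ∀ k : ℤ, 𝔤.G k → 𝔤.G k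
  | 0, _, y => y
  | n + 1, k, y => 𝔤.cst (zero_add k) (𝔤.bracket 0 k X (𝔤.adpow X n k y))

/-- The twisted differential `δ + ad(γ) : 𝔤^k → 𝔤^{k+1}`. -/
def DGLA.opGamma (𝔤 : DGLA) (γ : 𝔤.G 1) (k : ℤ) (y : 𝔤.G k) : 𝔤.G (k + 1) :=
  𝔤.d k y + 𝔤.cst (add_comm 1 k) (𝔤.bracket 1 k γ y)

/-- The gauge action
`(exp X)·γ = γ − Σ_{i} (ad X)^i/(i+1)! (δX + [γ,X])` (the series truncated at
`N`, which suffices when `(ad X)^N = 0`). -/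
def DGLA.gaugeAct (𝔤 : DGLA) (N : ℕ) (X : 𝔤.G 0) (γ : 𝔤.G 1) : 𝔤.G 1 :=
  γ - ∑ i ∈ Finset.range N, ((Nat.factorial (i + 1) : ℚ))⁻¹ •
      𝔤.adpow X i 1 (𝔤.cst (by norm_num) (𝔤.d 0 X) + 𝔤.cst (by norm_num) (𝔤.bracket 1 0 γ X))

/-- `e^{ad X} = Σ_i (ad X)^i / i!` on `𝔤^k` (truncated at `N`). -/
def DGLA.expAd (𝔤 : DGLA) (N : ℕ) (X : 𝔤.G 0) (k : ℤ) (y : 𝔤.G k) : 𝔤.G k :=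
  ∑ i ∈ Finset.range N, ((Nat.factorial i : ℚ))⁻¹ • 𝔤.adpow X i k y

namespace DGLA

variable (𝔤 : DGLA)

/-! ### cast lemmas -/

theorem cst_cst {i j l : ℤ} (h1 : i = j) (h2 : j = l) (x : 𝔤.G i) :
    𝔤.cst h2 (𝔤.cst h1 x) = 𝔤.cst (h1.trans h2) x := by subst h1; subst h2; rfl

@[simp] theorem cst_rfl {i : ℤ} (h : i = i) (x : 𝔤.G i) : 𝔤.cst h x = x := rfl

theorem cst_add {i j : ℤ} (h : i = j) (x y : 𝔤.G i) :
    𝔤.cst h (x + y) = 𝔤.cst h x + 𝔤.cst h y := by subst h; rfl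

theorem cst_smul {i j : ℤ} (h : i = j) (c : ℚ) (x : 𝔤.G i) :
    𝔤.cst h (c • x) = c • 𝔤.cst h x := by subst h; rfl

theorem cst_neg {i j : ℤ} (h : i = j) (x : 𝔤.G i) :
    𝔤.cst h (-x) = -𝔤.cst h x := by subst h; rfl

theorem cst_zero {i j : ℤ} (h : i = j) : 𝔤.cst h (0 : 𝔤.G i) = 0 := by subst h; rfl

theorem d_cst {i j : ℤ} (h : i = j) (x : 𝔤.G i) :
    𝔤.d j (𝔤.cst h x) = 𝔤.cst (by rw [h]) (𝔤.d i x) := by subst h; rfl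

theorem brkL {i i' j : ℤ} (h : i = i') (x : 𝔤.G i) (y : 𝔤.G j) :
    𝔤.bracket i' j (𝔤.cst h x) y = 𝔤.cst (by rw [h]) (𝔤.bracket i j x y) := by subst h; rfl

theorem brkR {j j' i : ℤ} (h : j = j') (x : 𝔤.G i) (y : 𝔤.G j) :
    𝔤.bracket i j' x (𝔤.cst h y) = 𝔤.cst (by rw [h]) (𝔤.bracket i j x y) := by subst h; rfl

/-! ### basic operators -/

def ad0 (X : 𝔤.G 0) (k : ℤ) (y : 𝔤.G k) : 𝔤.G k :=
  𝔤.cst (zero_add k) (𝔤.bracket 0 k X y)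

def ad1 (Q : 𝔤.G 1) (k : ℤ) (y : 𝔤.G k) : 𝔤.G (k + 1) :=
  𝔤.cst (add_comm 1 k) (𝔤.bracket 1 k Q y)

theorem ad0_add (X : 𝔤.G 0) (k : ℤ) (x y : 𝔤.G k) :
    𝔤.ad0 X k (x + y) = 𝔤.ad0 X k x + 𝔤.ad0 X k y := by
  simp [ad0, map_add, cst_add]

theorem ad0_smul (X : 𝔤.G 0) (k : ℤ) (c : ℚ) (x : 𝔤.G k) :
    𝔤.ad0 X k (c • x) = c • 𝔤.ad0 X k x := by
  simp [ad0, map_smul, cst_smul]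

theorem ad0_zero (X : 𝔤.G 0) (k : ℤ) : 𝔤.ad0 X k 0 = 0 := by
  simp [ad0, map_zero, cst_zero]

theorem ad0_neg' (X : 𝔤.G 0) (k : ℤ) (x : 𝔤.G k) :
    𝔤.ad0 (-X) k x = -𝔤.ad0 X k x := by
  simp [ad0, map_neg, LinearMap.neg_apply, cst_neg]

def ad0L (X : 𝔤.G 0) (k : ℤ) : 𝔤.G k →ₗ[ℚ] 𝔤.G k where
  toFun := 𝔤.ad0 X k
  map_add' := 𝔤.ad0_add X k
  map_smul' := 𝔤.ad0_smul X k

theorem ad0_sum (X : 𝔤.G 0) (k : ℤ) {α : Type*} (s : Finset α) (f : α → 𝔤.G k) :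
    𝔤.ad0 X k (∑ a ∈ s, f a) = ∑ a ∈ s, 𝔤.ad0 X k (f a) :=
  map_sum (𝔤.ad0L X k) f s

theorem ad1_add (Q : 𝔤.G 1) (k : ℤ) (x y : 𝔤.G k) :
    𝔤.ad1 Q k (x + y) = 𝔤.ad1 Q k x + 𝔤.ad1 Q k y := by
  simp [ad1, map_add, cst_add]

theorem ad1_smul (Q : 𝔤.G 1) (k : ℤ) (c : ℚ) (x : 𝔤.G k) :
    𝔤.ad1 Q k (c • x) = c • 𝔤.ad1 Q k x := by
  simp [ad1, map_smul, cst_smul]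

theorem ad1_zero (Q : 𝔤.G 1) (k : ℤ) : 𝔤.ad1 Q k 0 = 0 := by
  simp [ad1, map_zero, cst_zero]

theorem ad1_Qadd (Q R : 𝔤.G 1) (k : ℤ) (y : 𝔤.G k) :
    𝔤.ad1 (Q + R) k y = 𝔤.ad1 Q k y + 𝔤.ad1 R k y := by
  simp [ad1, map_add, LinearMap.add_apply, cst_add]

theorem ad1_Qneg (Q : 𝔤.G 1) (k : ℤ) (y : 𝔤.G k) :
    𝔤.ad1 (-Q) k y = -𝔤.ad1 Q k y := by
  simp [ad1, map_neg, LinearMap.neg_apply, cst_neg]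

theorem ad1_Qsub (Q R : 𝔤.G 1) (k : ℤ) (y : 𝔤.G k) :
    𝔤.ad1 (Q - R) k y = 𝔤.ad1 Q k y - 𝔤.ad1 R k y := by
  rw [sub_eq_add_neg, ad1_Qadd, ad1_Qneg, sub_eq_add_neg]

theorem ad1_Qsmul (c : ℚ) (Q : 𝔤.G 1) (k : ℤ) (y : 𝔤.G k) :
    𝔤.ad1 (c • Q) k y = c • 𝔤.ad1 Q k y := by
  simp [ad1, map_smul, LinearMap.smul_apply, cst_smul]

theorem ad1_Qzero (k : ℤ) (y : 𝔤.G k) : 𝔤.ad1 0 k y = 0 := by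
  simp [ad1, map_zero, LinearMap.zero_apply, cst_zero]

theorem ad1_Qsum {α : Type*} (s : Finset α) (f : α → 𝔤.G 1) (k : ℤ) (y : 𝔤.G k) :
    𝔤.ad1 (∑ a ∈ s, f a) k y = ∑ a ∈ s, 𝔤.ad1 (f a) k y := by
  classical
  induction s using Finset.induction_on with
  | empty => simp [ad1_Qzero]
  | insert _ _ h ih => rw [Finset.sum_insert h, Finset.sum_insert h, ad1_Qadd, ih]

/-! ### adpow lemmas -/

theorem adpow_zero (X : 𝔤.G 0) (k : ℤ) (y : 𝔤.G k) : 𝔤.adpow X 0 k y = y := rfl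

theorem adpow_succ (X : 𝔤.G 0) (n : ℕ) (k : ℤ) (y : 𝔤.G k) :
    𝔤.adpow X (n + 1) k y = 𝔤.ad0 X k (𝔤.adpow X n k y) := rfl

theorem adpow_add' (X : 𝔤.G 0) (m n : ℕ) (k : ℤ) (y : 𝔤.G k) :
    𝔤.adpow X (m + n) k y = 𝔤.adpow X m k (𝔤.adpow X n k y) := by
  induction m with
  | zero => rw [Nat.zero_add]; rfl
  | succ m ih => rw [Nat.succ_add, adpow_succ, adpow_succ, ih]

theorem adpow_map_add (X : 𝔤.G 0) (n : ℕ) (k : ℤ) (x y : 𝔤.G k) :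
    𝔤.adpow X n k (x + y) = 𝔤.adpow X n k x + 𝔤.adpow X n k y := by
  induction n with
  | zero => rfl
  | succ n ih => rw [adpow_succ, ih, ad0_add]; rfl

theorem adpow_map_smul (X : 𝔤.G 0) (n : ℕ) (k : ℤ) (c : ℚ) (x : 𝔤.G k) :
    𝔤.adpow X n k (c • x) = c • 𝔤.adpow X n k x := by
  induction n with
  | zero => rfl
  | succ n ih => rw [adpow_succ, ih, ad0_smul]; rfl

def adpowL (X : 𝔤.G 0) (n : ℕ) (k : ℤ) : 𝔤.G k →ₗ[ℚ] 𝔤.G k where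
  toFun := 𝔤.adpow X n k
  map_add' := 𝔤.adpow_map_add X n k
  map_smul' := 𝔤.adpow_map_smul X n k

theorem adpow_map_zero (X : 𝔤.G 0) (n : ℕ) (k : ℤ) : 𝔤.adpow X n k 0 = 0 :=
  map_zero (𝔤.adpowL X n k)

theorem adpow_sum (X : 𝔤.G 0) (n : ℕ) (k : ℤ) {α : Type*} (s : Finset α) (f : α → 𝔤.G k) :
    𝔤.adpow X n k (∑ a ∈ s, f a) = ∑ a ∈ s, 𝔤.adpow X n k (f a) :=
  map_sum (𝔤.adpowL X n k) f s

theorem adpow_eq_zero (X : 𝔤.G 0) {N : ℕ}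
    (hnil : ∀ (k : ℤ) (y : 𝔤.G k), 𝔤.adpow X N k y = 0)
    {m : ℕ} (hm : N ≤ m) (k : ℤ) (y : 𝔤.G k) : 𝔤.adpow X m k y = 0 := by
  obtain ⟨c, rfl⟩ := Nat.exists_eq_add_of_le hm
  rw [adpow_add', hnil]

theorem adpow_neg (X : 𝔤.G 0) (n : ℕ) (k : ℤ) (y : 𝔤.G k) :
    𝔤.adpow (-X) n k y = ((-1 : ℚ)) ^ n • 𝔤.adpow X n k y := by
  induction n with
  | zero => simp [adpow_zero]
  | succ n ih =>
    rw [adpow_succ, ih, ad0_smul, ad0_neg', adpow_succ, pow_succ]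
    rw [smul_neg, ← neg_smul, mul_comm, mul_smul]
    norm_num

end DGLA

namespace DGLA
variable (𝔤 : DGLA)

theorem jac01 (X : 𝔤.G 0) (Q : 𝔤.G 1) (k : ℤ) (y : 𝔤.G k) :
    𝔤.ad0 X (k+1) (𝔤.ad1 Q k y)
      = 𝔤.ad1 (𝔤.ad0 X 1 Q) k y + 𝔤.ad1 Q k (𝔤.ad0 X k y) := by
  have J : 𝔤.cst (show (0:ℤ)+(1+k) = 0+1+k by ring)
        (𝔤.bracket 0 (1+k) X (𝔤.bracket 1 k Q y))
      = 𝔤.bracket (0+1) k (𝔤.bracket 0 1 X Q) y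
        + ((-1:ℚ))^((0:ℤ)*(1:ℤ)) •
          𝔤.cst (show (1:ℤ)+(0+k) = 0+1+k by ring)
            (𝔤.bracket 1 (0+k) Q (𝔤.bracket 0 k X y)) := 𝔤.jacobi 0 1 k X Q y
  have J2 := congrArg (𝔤.cst (show (0:ℤ)+1+k = k+1 by ring)) J
  simp only [cst_add, cst_smul, cst_cst, brkL, brkR] at J2
  norm_num at J2
  simp only [ad0, ad1, brkL, brkR, cst_cst]
  exact J2

def dX1 (X : 𝔤.G 0) : 𝔤.G 1 := 𝔤.cst (by norm_num) (𝔤.d 0 X)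

theorem leib0 (X : 𝔤.G 0) (k : ℤ) (y : 𝔤.G k) :
    𝔤.d k (𝔤.ad0 X k y) = 𝔤.ad1 (𝔤.dX1 X) k y + 𝔤.ad0 X (k+1) (𝔤.d k y) := by
  have J : 𝔤.d (0+k) (𝔤.bracket 0 k X y)
      = 𝔤.cst (show (0:ℤ)+1+k = 0+k+1 by ring) (𝔤.bracket (0+1) k (𝔤.d 0 X) y)
        + ((-1:ℚ))^((0:ℤ)) •
          𝔤.cst (show (0:ℤ)+(k+1) = 0+k+1 by ring)
            (𝔤.bracket 0 (k+1) X (𝔤.d k y)) := 𝔤.leibniz 0 k X y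
  have J2 := congrArg (𝔤.cst (show (0:ℤ)+k+1 = k+1 by ring)) J
  simp only [cst_add, cst_smul, cst_cst, brkL, brkR] at J2
  norm_num at J2
  simp only [ad0, ad1, dX1, brkL, brkR, d_cst, cst_cst]
  exact J2

theorem asym10 (X : 𝔤.G 0) (γ : 𝔤.G 1) (h : (1:ℤ)+0 = 1) :
    𝔤.cst h (𝔤.bracket 1 0 γ X) = -𝔤.ad0 X 1 γ := by
  have J : 𝔤.bracket 1 0 γ X
      = (-((-1:ℚ)^((1:ℤ)*(0:ℤ)))) •
          𝔤.cst (show (0:ℤ)+1 = 1+0 by ring) (𝔤.bracket 0 1 X γ) := 𝔤.antisymm 1 0 γ X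
  have J2 := congrArg (𝔤.cst h) J
  simp only [cst_smul, cst_cst] at J2
  norm_num at J2
  simp only [ad0, cst_cst]
  exact J2

end DGLA

namespace DGLA
variable (𝔤 : DGLA)

def Pel (X : 𝔤.G 0) (γ : 𝔤.G 1) : 𝔤.G 1 :=
  𝔤.cst (by norm_num) (𝔤.d 0 X) + 𝔤.cst (by norm_num) (𝔤.bracket 1 0 γ X)

/-- `T 0 = δ + ad γ`, `T (j+1) = -ad((ad X)^j (δX + [γ,X]))`. -/
def Tt (X : 𝔤.G 0) (γ : 𝔤.G 1) : ℕ → ∀ k : ℤ, 𝔤.G k → 𝔤.G (k+1)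
  | 0, k, y => 𝔤.opGamma γ k y
  | j+1, k, y => -𝔤.ad1 (𝔤.adpow X j 1 (𝔤.Pel X γ)) k y

theorem Pel_eq (X : 𝔤.G 0) (γ : 𝔤.G 1) :
    𝔤.Pel X γ = 𝔤.dX1 X - 𝔤.ad0 X 1 γ := by
  rw [Pel, asym10 𝔤 X γ (by norm_num), sub_eq_add_neg]; rfl

theorem ad0_negArg (X : 𝔤.G 0) (k : ℤ) (x : 𝔤.G k) :
    𝔤.ad0 X k (-x) = -𝔤.ad0 X k x := map_neg (𝔤.ad0L X k) x

theorem TR (X : 𝔤.G 0) (γ : 𝔤.G 1) (j : ℕ) (k : ℤ) (y : 𝔤.G k) :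
    𝔤.ad0 X (k+1) (𝔤.Tt X γ j k y)
      = 𝔤.Tt X γ j k (𝔤.ad0 X k y) + 𝔤.Tt X γ (j+1) k y := by
  cases j with
  | zero =>
    show 𝔤.ad0 X (k+1) (𝔤.opGamma γ k y)
        = 𝔤.opGamma γ k (𝔤.ad0 X k y) + -𝔤.ad1 (𝔤.adpow X 0 1 (𝔤.Pel X γ)) k y
    rw [adpow_zero, Pel_eq, ad1_Qsub]
    have h1 : 𝔤.opGamma γ k y = 𝔤.d k y + 𝔤.ad1 γ k y := rfl
    have h2 : 𝔤.opGamma γ k (𝔤.ad0 X k y) = 𝔤.d k (𝔤.ad0 X k y) + 𝔤.ad1 γ k (𝔤.ad0 X k y) := rfl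
    rw [h1, h2, ad0_add, jac01, leib0]
    abel
  | succ j =>
    show 𝔤.ad0 X (k+1) (-𝔤.ad1 (𝔤.adpow X j 1 (𝔤.Pel X γ)) k y)
        = -𝔤.ad1 (𝔤.adpow X j 1 (𝔤.Pel X γ)) k (𝔤.ad0 X k y)
          + -𝔤.ad1 (𝔤.adpow X (j+1) 1 (𝔤.Pel X γ)) k y
    rw [ad0_negArg, jac01, adpow_succ]
    abel

theorem Tt_add (X : 𝔤.G 0) (γ : 𝔤.G 1) (j : ℕ) (k : ℤ) (x y : 𝔤.G k) :
    𝔤.Tt X γ j k (x + y) = 𝔤.Tt X γ j k x + 𝔤.Tt X γ j k y := by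
  cases j with
  | zero =>
    show 𝔤.opGamma γ k (x+y) = 𝔤.opGamma γ k x + 𝔤.opGamma γ k y
    simp only [opGamma, map_add, cst_add]
    abel
  | succ j =>
    show -𝔤.ad1 _ k (x+y) = -𝔤.ad1 _ k x + -𝔤.ad1 _ k y
    rw [ad1_add]; abel

theorem Tt_smul (X : 𝔤.G 0) (γ : 𝔤.G 1) (j : ℕ) (k : ℤ) (c : ℚ) (y : 𝔤.G k) :
    𝔤.Tt X γ j k (c • y) = c • 𝔤.Tt X γ j k y := by
  cases j with
  | zero =>
    show 𝔤.opGamma γ k (c • y) = c • 𝔤.opGamma γ k y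
    simp only [opGamma, map_smul, cst_smul, smul_add]
  | succ j =>
    show -𝔤.ad1 _ k (c • y) = c • -𝔤.ad1 _ k y
    rw [ad1_smul, smul_neg]

def TtL (X : 𝔤.G 0) (γ : 𝔤.G 1) (j : ℕ) (k : ℤ) : 𝔤.G k →ₗ[ℚ] 𝔤.G (k+1) where
  toFun := 𝔤.Tt X γ j k
  map_add' := 𝔤.Tt_add X γ j k
  map_smul' := 𝔤.Tt_smul X γ j k

theorem Tt_zero (X : 𝔤.G 0) (γ : 𝔤.G 1) (j : ℕ) (k : ℤ) :
    𝔤.Tt X γ j k 0 = 0 := map_zero (𝔤.TtL X γ j k)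

theorem Tt_sum (X : 𝔤.G 0) (γ : 𝔤.G 1) (j : ℕ) (k : ℤ) {α : Type*}
    (s : Finset α) (f : α → 𝔤.G k) :
    𝔤.Tt X γ j k (∑ a ∈ s, f a) = ∑ a ∈ s, 𝔤.Tt X γ j k (f a) :=
  map_sum (𝔤.TtL X γ j k) f s

theorem Tt_large (X : 𝔤.G 0) (γ : 𝔤.G 1) {N : ℕ}
    (hnil : ∀ (k : ℤ) (y : 𝔤.G k), 𝔤.adpow X N k y = 0)
    {j : ℕ} (hj : N + 1 ≤ j) (k : ℤ) (y : 𝔤.G k) : 𝔤.Tt X γ j k y = 0 := by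
  obtain ⟨i, rfl⟩ : ∃ i, j = i + 1 := ⟨j - 1, by omega⟩
  show -𝔤.ad1 (𝔤.adpow X i 1 (𝔤.Pel X γ)) k y = 0
  rw [adpow_eq_zero 𝔤 X hnil (by omega), ad1_Qzero, neg_zero]

/-- The key binomial commutation identity. -/
theorem ACom (X : 𝔤.G 0) (γ : 𝔤.G 1) (m j : ℕ) (k : ℤ) (y : 𝔤.G k) :
    𝔤.adpow X m (k+1) (𝔤.Tt X γ j k y)
      = ∑ i ∈ Finset.range (m+1),
          ((m.choose i : ℚ)) • 𝔤.Tt X γ (j+i) k (𝔤.adpow X (m-i) k y) := by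
  induction m with
  | zero => simp [adpow_zero]
  | succ m ih =>
    have step : ∀ i ∈ Finset.range (m+1),
        ((m.choose i : ℚ)) • 𝔤.ad0 X (k+1) (𝔤.Tt X γ (j+i) k (𝔤.adpow X (m-i) k y))
          = ((m.choose i : ℚ)) • 𝔤.Tt X γ (j+i) k (𝔤.adpow X (m+1-i) k y)
            + ((m.choose i : ℚ)) • 𝔤.Tt X γ (j+i+1) k (𝔤.adpow X (m-i) k y) := by
      intro i hi
      have hi' : i ≤ m := Finset.mem_range_succ_iff.mp hi
      rw [TR, smul_add, ← adpow_succ, Nat.succ_sub hi']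
    calc 𝔤.adpow X (m+1) (k+1) (𝔤.Tt X γ j k y)
        = 𝔤.ad0 X (k+1) (∑ i ∈ Finset.range (m+1),
            ((m.choose i : ℚ)) • 𝔤.Tt X γ (j+i) k (𝔤.adpow X (m-i) k y)) := by
          rw [adpow_succ, ih]
      _ = ∑ i ∈ Finset.range (m+1),
            (((m.choose i : ℚ)) • 𝔤.Tt X γ (j+i) k (𝔤.adpow X (m+1-i) k y)
              + ((m.choose i : ℚ)) • 𝔤.Tt X γ (j+i+1) k (𝔤.adpow X (m-i) k y)) := by
          rw [ad0_sum]
          refine Finset.sum_congr rfl fun i hi => ?_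
          rw [ad0_smul, step i hi]
      _ = (∑ i ∈ Finset.range (m+1),
            ((m.choose i : ℚ)) • 𝔤.Tt X γ (j+i) k (𝔤.adpow X (m+1-i) k y))
          + ∑ i ∈ Finset.range (m+1),
            ((m.choose i : ℚ)) • 𝔤.Tt X γ (j+i+1) k (𝔤.adpow X (m-i) k y) :=
          Finset.sum_add_distrib
      _ = ∑ i ∈ Finset.range (m+1+1),
          (((m+1).choose i : ℚ)) • 𝔤.Tt X γ (j+i) k (𝔤.adpow X (m+1-i) k y) := by
          rw [Finset.sum_range_succ' (fun i =>
            ((m.choose i : ℚ)) • 𝔤.Tt X γ (j+i) k (𝔤.adpow X (m+1-i) k y)) m]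
          rw [Finset.sum_range_succ' (fun i =>
            (((m+1).choose i : ℚ)) • 𝔤.Tt X γ (j+i) k (𝔤.adpow X (m+1-i) k y)) (m+1)]
          simp only [Nat.choose_zero_right, Nat.cast_one, one_smul, Nat.add_zero,
            Nat.sub_zero, Nat.choose_succ_succ, Nat.cast_add, add_smul,
            Nat.succ_sub_succ_eq_sub]
          rw [Finset.sum_add_distrib]
          have hlast : ∑ i ∈ Finset.range (m+1),
              ((m.choose (i+1) : ℚ)) • 𝔤.Tt X γ (j+(i+1)) k (𝔤.adpow X (m-i) k y)
              = ∑ i ∈ Finset.range m,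
              ((m.choose (i+1) : ℚ)) • 𝔤.Tt X γ (j+(i+1)) k (𝔤.adpow X (m-i) k y) := by
            rw [Finset.sum_range_succ, Nat.choose_succ_self, Nat.cast_zero, zero_smul,
              add_zero]
          have hfix : ∀ i, 𝔤.Tt X γ (j+i+1) k (𝔤.adpow X (m-i) k y)
              = 𝔤.Tt X γ (j+(i+1)) k (𝔤.adpow X (m-i) k y) := by
            intro i; rw [Nat.add_assoc]
          simp only [hfix]
          rw [hlast]
          abel


end DGLA

namespace DGLA

/-- Reindexing a square sum as a sum over antidiagonals, given vanishing
outside the triangle. -/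
theorem box_eq_tri {V : Type*} [AddCommMonoid V] (M : ℕ) (g : ℕ → ℕ → V)
    (hg : ∀ a b, M ≤ a + b → g a b = 0) :
    ∑ a ∈ Finset.range M, ∑ b ∈ Finset.range M, g a b
      = ∑ m ∈ Finset.range M, ∑ i ∈ Finset.range (m+1), g i (m-i) := by
  classical
  have h1 : ∑ a ∈ Finset.range M, ∑ b ∈ Finset.range M, g a b
      = ∑ p ∈ (Finset.range M ×ˢ Finset.range M), g p.1 p.2 := by
    rw [Finset.sum_product]
  have h2 : ∑ p ∈ ((Finset.range M ×ˢ Finset.range M).filter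
        (fun p => p.1 + p.2 < M)), g p.1 p.2
      = ∑ p ∈ (Finset.range M ×ˢ Finset.range M), g p.1 p.2 := by
    refine Finset.sum_subset (Finset.filter_subset _ _) ?_
    intro p hp hnp
    refine hg p.1 p.2 ?_
    by_contra hlt
    exact hnp (Finset.mem_filter.mpr ⟨hp, by omega⟩)
  have h3 : ∑ m ∈ Finset.range M, ∑ i ∈ Finset.range (m+1), g i (m-i)
      = ∑ q ∈ (Finset.range M).sigma (fun m => Finset.range (m+1)), g q.2 (q.1 - q.2) := by
    rw [Finset.sum_sigma]
  have h4 : ∑ q ∈ (Finset.range M).sigma (fun m => Finset.range (m+1)), g q.2 (q.1 - q.2)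
      = ∑ p ∈ ((Finset.range M ×ˢ Finset.range M).filter
        (fun p => p.1 + p.2 < M)), g p.1 p.2 := by
    refine Finset.sum_nbij' (fun q => (q.2, q.1 - q.2)) (fun p => ⟨p.1 + p.2, p.1⟩)
      ?_ ?_ ?_ ?_ ?_
    · intro q hq
      simp only [Finset.mem_sigma, Finset.mem_range] at hq
      simp only [Finset.mem_filter, Finset.mem_product, Finset.mem_range]
      omega
    · intro p hp
      simp only [Finset.mem_filter, Finset.mem_product, Finset.mem_range] at hp
      simp only [Finset.mem_sigma, Finset.mem_range]
      omega
    · intro q hq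
      simp only [Finset.mem_sigma, Finset.mem_range] at hq
      have : q.2 + (q.1 - q.2) = q.1 := by omega
      simp [this]
    · intro p hp
      simp only [Finset.mem_filter, Finset.mem_product, Finset.mem_range] at hp
      simp
    · intro q hq
      rfl
  rw [h1, ← h2, ← h4, ← h3]

theorem coeff_eq {i m : ℕ} (h : i ≤ m) :
    ((m.factorial : ℚ))⁻¹ * ((m.choose i : ℚ))
      = ((i.factorial : ℚ))⁻¹ * (((m - i).factorial : ℚ))⁻¹ := by
  have h1 : (i.factorial : ℚ) ≠ 0 := Nat.cast_ne_zero.mpr (Nat.factorial_ne_zero i)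
  have h2 : ((m - i).factorial : ℚ) ≠ 0 := Nat.cast_ne_zero.mpr (Nat.factorial_ne_zero _)
  have h3 : (m.factorial : ℚ) ≠ 0 := Nat.cast_ne_zero.mpr (Nat.factorial_ne_zero m)
  rw [Nat.cast_choose ℚ h]
  field_simp

theorem alt_sum (m : ℕ) :
    ∑ i ∈ Finset.range (m+1), (((m.choose i : ℚ)) * ((-1:ℚ))^(m-i))
      = if m = 0 then 1 else 0 := by
  have h := add_pow (1:ℚ) (-1) m
  simp only [one_pow, one_mul, add_neg_cancel] at h
  rw [zero_pow_eq] at h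
  rw [h]
  refine Finset.sum_congr rfl fun i _ => ?_
  ring

end DGLA

namespace DGLA
variable (𝔤 : DGLA)

theorem opGamma_gauge (N : ℕ) (X : 𝔤.G 0) (γ : 𝔤.G 1) (k : ℤ) (y : 𝔤.G k) :
    𝔤.opGamma (𝔤.gaugeAct N X γ) k y
      = ∑ j ∈ Finset.range (N+1), ((j.factorial : ℚ))⁻¹ • 𝔤.Tt X γ j k y := by
  have hga : 𝔤.gaugeAct N X γ
      = γ - ∑ i ∈ Finset.range N, ((Nat.factorial (i+1) : ℚ))⁻¹ •
          𝔤.adpow X i 1 (𝔤.Pel X γ) := rfl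
  have hopg : ∀ (Q : 𝔤.G 1), 𝔤.opGamma Q k y = 𝔤.d k y + 𝔤.ad1 Q k y := fun _ => rfl
  rw [hopg, hga, ad1_Qsub, ad1_Qsum]
  rw [Finset.sum_range_succ' (fun j => ((j.factorial:ℚ))⁻¹ • 𝔤.Tt X γ j k y) N]
  have hterm : ∀ i, ((Nat.factorial (i+1):ℚ))⁻¹ • 𝔤.Tt X γ (i+1) k y
      = -(((Nat.factorial (i+1):ℚ))⁻¹ • 𝔤.ad1 (𝔤.adpow X i 1 (𝔤.Pel X γ)) k y) := by
    intro i
    rw [show 𝔤.Tt X γ (i+1) k y = -𝔤.ad1 (𝔤.adpow X i 1 (𝔤.Pel X γ)) k y from rfl, smul_neg]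
  simp only [hterm, ad1_Qsmul]
  rw [show 𝔤.Tt X γ 0 k y = 𝔤.d k y + 𝔤.ad1 γ k y from rfl]
  rw [Nat.factorial_zero]
  norm_num
  abel

theorem expAd_inv (N : ℕ) (hN : 0 < N) (X : 𝔤.G 0)
    (hnil : ∀ (k : ℤ) (y : 𝔤.G k), 𝔤.adpow X N k y = 0) (k : ℤ) (y : 𝔤.G k) :
    𝔤.expAd N X k (𝔤.expAd N (-X) k y) = y := by
  set g : ℕ → ℕ → 𝔤.G k := fun i j =>
    (((i.factorial:ℚ))⁻¹ * (((j.factorial:ℚ))⁻¹ * ((-1:ℚ))^j)) • 𝔤.adpow X (i+j) k y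
    with hgdef
  have hstep : 𝔤.expAd N X k (𝔤.expAd N (-X) k y)
      = ∑ i ∈ Finset.range N, ∑ j ∈ Finset.range N, g i j := by
    rw [show 𝔤.expAd N X k (𝔤.expAd N (-X) k y) = ∑ i ∈ Finset.range N,
        ((i.factorial:ℚ))⁻¹ • 𝔤.adpow X i k (𝔤.expAd N (-X) k y) from rfl]
    refine Finset.sum_congr rfl fun i _ => ?_
    rw [show 𝔤.expAd N (-X) k y = ∑ j ∈ Finset.range N,
        ((j.factorial:ℚ))⁻¹ • 𝔤.adpow (-X) j k y from rfl]
    rw [adpow_sum, Finset.smul_sum]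
    refine Finset.sum_congr rfl fun j _ => ?_
    rw [adpow_neg, adpow_map_smul, adpow_map_smul, ← adpow_add', smul_smul, smul_smul]
    simp only [hgdef]
    rw [mul_assoc]
  have hg0 : ∀ a b, N ≤ a + b → g a b = 0 := by
    intro a b hab
    simp only [hgdef]
    rw [adpow_eq_zero 𝔤 X hnil hab, smul_zero]
  rw [hstep, box_eq_tri N g hg0]
  have hinner : ∀ m ∈ Finset.range N, ∑ i ∈ Finset.range (m+1), g i (m-i)
      = (if m = 0 then (1:ℚ) else 0) • 𝔤.adpow X m k y := by
    intro m _
    have hc : ∀ i ∈ Finset.range (m+1), g i (m-i)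
        = (((m.factorial:ℚ))⁻¹ * (((m.choose i:ℚ)) * ((-1:ℚ))^(m-i))) • 𝔤.adpow X m k y := by
      intro i hi
      have hi' : i ≤ m := Finset.mem_range_succ_iff.mp hi
      simp only [hgdef]
      rw [show i + (m-i) = m by omega]
      congr 1
      rw [← mul_assoc, ← coeff_eq hi', mul_assoc]
    rw [Finset.sum_congr rfl hc, ← Finset.sum_smul, ← Finset.mul_sum, alt_sum]
    rcases eq_or_ne m 0 with hm | hm
    · simp [hm]
    · simp [hm]
  rw [Finset.sum_congr rfl hinner]
  rw [Finset.sum_eq_single 0]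
  · rw [if_pos rfl, one_smul, adpow_zero]
  · intro b _ hb
    rw [if_neg hb, zero_smul]
  · intro h
    exact absurd (Finset.mem_range.mpr hN) h

end DGLA

namespace DGLA
variable (𝔤 : DGLA)

theorem comm_lemma (N : ℕ) (X : 𝔤.G 0)
    (hnil : ∀ (k : ℤ) (y : 𝔤.G k), 𝔤.adpow X N k y = 0)
    (γ : 𝔤.G 1) (k : ℤ) (z : 𝔤.G k) :
    𝔤.opGamma (𝔤.gaugeAct N X γ) k (𝔤.expAd N X k z)
      = 𝔤.expAd N X (k+1) (𝔤.opGamma γ k z) := by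
  set M := 2*N+1 with hM
  set g : ℕ → ℕ → 𝔤.G (k+1) := fun a b =>
    ((a.factorial:ℚ))⁻¹ • ((b.factorial:ℚ))⁻¹ • 𝔤.Tt X γ a k (𝔤.adpow X b k z) with hgdef
  have hga : ∀ a b, N ≤ b → g a b = 0 := by
    intro a b hb
    simp only [hgdef]
    rw [adpow_eq_zero 𝔤 X hnil hb, Tt_zero, smul_zero, smul_zero]
  have hgb : ∀ a b, N+1 ≤ a → g a b = 0 := by
    intro a b ha
    simp only [hgdef]
    rw [Tt_large 𝔤 X γ hnil ha, smul_zero, smul_zero]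
  have hg0 : ∀ a b, M ≤ a + b → g a b = 0 := by
    intro a b hab
    rcases le_or_gt (N+1) a with h | h
    · exact hgb a b h
    · exact hga a b (by omega)
  have hL : 𝔤.opGamma (𝔤.gaugeAct N X γ) k (𝔤.expAd N X k z)
      = ∑ a ∈ Finset.range M, ∑ b ∈ Finset.range M, g a b := by
    rw [opGamma_gauge]
    have h1 : ∀ j : ℕ, 𝔤.Tt X γ j k (𝔤.expAd N X k z)
        = ∑ n ∈ Finset.range N, ((n.factorial:ℚ))⁻¹ • 𝔤.Tt X γ j k (𝔤.adpow X n k z) := by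
      intro j
      rw [show 𝔤.expAd N X k z = ∑ n ∈ Finset.range N,
          ((n.factorial:ℚ))⁻¹ • 𝔤.adpow X n k z from rfl, Tt_sum]
      exact Finset.sum_congr rfl fun n _ => Tt_smul ..
    calc ∑ j ∈ Finset.range (N+1), ((j.factorial:ℚ))⁻¹ • 𝔤.Tt X γ j k (𝔤.expAd N X k z)
        = ∑ j ∈ Finset.range (N+1), ∑ n ∈ Finset.range N, g j n := by
          refine Finset.sum_congr rfl fun j _ => ?_
          rw [h1, Finset.smul_sum]
      _ = ∑ j ∈ Finset.range (N+1), ∑ n ∈ Finset.range M, g j n := by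
          refine Finset.sum_congr rfl fun j _ => ?_
          refine Finset.sum_subset (Finset.range_subset_range.mpr (by omega)) ?_
          intro n _ hn
          exact hga j n (by simpa [Finset.mem_range, not_lt] using hn)
      _ = ∑ j ∈ Finset.range M, ∑ n ∈ Finset.range M, g j n := by
          refine Finset.sum_subset (Finset.range_subset_range.mpr (by omega)) ?_
          intro j _ hj
          refine Finset.sum_eq_zero fun n _ => ?_
          exact hgb j n (by simpa [Finset.mem_range, not_lt] using hj)
  have hR : 𝔤.expAd N X (k+1) (𝔤.opGamma γ k z)
      = ∑ m ∈ Finset.range M, ∑ i ∈ Finset.range (m+1), g i (m-i) := by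
    have h0 : 𝔤.opGamma γ k z = 𝔤.Tt X γ 0 k z := rfl
    calc 𝔤.expAd N X (k+1) (𝔤.opGamma γ k z)
        = ∑ m ∈ Finset.range N, ((m.factorial:ℚ))⁻¹ •
            𝔤.adpow X m (k+1) (𝔤.Tt X γ 0 k z) := by rw [← h0]; rfl
      _ = ∑ m ∈ Finset.range M, ((m.factorial:ℚ))⁻¹ •
            𝔤.adpow X m (k+1) (𝔤.Tt X γ 0 k z) := by
          refine Finset.sum_subset (Finset.range_subset_range.mpr (by omega)) ?_
          intro m _ hm
          rw [adpow_eq_zero 𝔤 X hnil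
            (by simpa [Finset.mem_range, not_lt] using hm), smul_zero]
      _ = ∑ m ∈ Finset.range M, ∑ i ∈ Finset.range (m+1), g i (m-i) := by
          refine Finset.sum_congr rfl fun m _ => ?_
          rw [ACom, Finset.smul_sum]
          refine Finset.sum_congr rfl fun i hi => ?_
          have hi' : i ≤ m := Finset.mem_range_succ_iff.mp hi
          simp only [hgdef, Nat.zero_add]
          rw [smul_smul, smul_smul, coeff_eq hi']
  rw [hL, hR, box_eq_tri M g hg0]

end DGLA

/-- **Gauge equivalences conjugate the twisted differential.** If `γ₁, γ₂` are
Maurer-Cartan elements of a DGLA `𝔤` with `γ₂ = (exp X)·γ₁` for a (nilpotent)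
`X ∈ 𝔤⁰`, then `δ + ad(γ₂) = e^{ad X} ∘ (δ + ad(γ₁)) ∘ e^{−ad X}` as operators
on `𝔤`. -/
theorem gauge_conjugates_twisted_differential (𝔤 : DGLA) (N : ℕ) (X : 𝔤.G 0)
    (hnil : ∀ (k : ℤ) (y : 𝔤.G k), 𝔤.adpow X N k y = 0)
    (γ₁ γ₂ : 𝔤.G 1) (h1 : 𝔤.curv γ₁ = 0) (h2 : 𝔤.curv γ₂ = 0)
    (hg : γ₂ = 𝔤.gaugeAct N X γ₁) :
    ∀ (k : ℤ) (y : 𝔤.G k),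
      𝔤.opGamma γ₂ k y
        = 𝔤.expAd N X (k + 1) (𝔤.opGamma γ₁ k (𝔤.expAd N (-X) k y)) := by
  intro k y
  cases N with
  | zero =>
    have h0 : ∀ (j : ℤ) (a : 𝔤.G j), a = 0 := fun j a => hnil j a
    exact (h0 _ _).trans (h0 _ _).symm
  | succ n =>
    subst hg
    rw [← DGLA.comm_lemma 𝔤 (n+1) X hnil γ₁ k (𝔤.expAd (n+1) (-X) k y),
      DGLA.expAd_inv 𝔤 (n+1) (Nat.succ_pos n) X hnil k y]
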